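/- Let e ≥ 2 and let λ be an e-restricted partition with bottom removable sequence (A_1,…,A_r). For a permutation σ of {1,…,r} and 1 ≤ j ≤ r, let λ^σ_j = λ ∖ {A_{σ(1)},…,A_{σ(j−1)}}. Then in ℤ[q,q^{−1}], Σ_{σ ∈ S_r} q^{Σ_{j=1}^{r} d_{A_{σ(j)}}(λ^σ_j)} = [r]_q!. -/

import Mathlib

namespace KN

/-- A subset of `ℤ²_{≥1}` (encoded in `ℕ × ℕ`) shaped like a Young diagram:
all coordinates are `≥ 1` and the set is closed under decreasing either coordinate
(staying `≥ 1`). -/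
def IsDiagram (S : Set (ℕ × ℕ)) : Prop :=
  (∀ p ∈ S, 1 ≤ p.1 ∧ 1 ≤ p.2) ∧
  ∀ a b a' b', (a, b) ∈ S → 1 ≤ a' → a' ≤ a → 1 ≤ b' → b' ≤ b → (a', b') ∈ S

/-- The Young diagram of a partition given as a function `l : ℕ → ℕ`
(`l r` is the `r`-th part, for `r ≥ 1`): the nodes `(a, b)` with `a, b ≥ 1`, `b ≤ l a`. -/
def cells (l : ℕ → ℕ) : Set (ℕ × ℕ) := {p | 1 ≤ p.1 ∧ 1 ≤ p.2 ∧ p.2 ≤ l p.1}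

/-- `l` (indexed from `1`) is a weakly decreasing sequence of naturals, eventually zero. -/
def IsPartitionFun (l : ℕ → ℕ) : Prop :=
  (∀ r, 1 ≤ r → l (r + 1) ≤ l r) ∧ ∃ N, ∀ r, N ≤ r → l r = 0

/-- `l` is a partition of `d`: its Young diagram has exactly `d` nodes. -/
def IsPartitionOf (l : ℕ → ℕ) (d : ℕ) : Prop :=
  IsPartitionFun l ∧ (cells l).Finite ∧ (cells l).ncard = d

/-- `λ_r - λ_{r+1} < e` for all `r ≥ 1`. -/
def IsRestricted (e : ℕ) (l : ℕ → ℕ) : Prop := ∀ r, 1 ≤ r → l r < l (r + 1) + e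

/-- The `m`-th ladder `L_m = {(1 + k, m - k(e-1)) : k ≥ 0, k(e-1) < m}`. -/
def ladder (e m : ℕ) : Set (ℕ × ℕ) :=
  {p | ∃ k : ℕ, k * (e - 1) < m ∧ p = (1 + k, m - k * (e - 1))}

/-- The residue `b - a (mod e)` of a node `(a, b)`. -/
def res (e : ℕ) (p : ℕ × ℕ) : ZMod e := (p.2 : ZMod e) - (p.1 : ZMod e)

/-- `A` is a removable node of the diagram `S`. -/
def Removable (S : Set (ℕ × ℕ)) (A : ℕ × ℕ) : Prop := A ∈ S ∧ IsDiagram (S \ {A})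

/-- `B` is an addable node of the diagram `S`. -/
def Addable (S : Set (ℕ × ℕ)) (B : ℕ × ℕ) : Prop := B ∉ S ∧ IsDiagram (S ∪ {B})

/-- `σ_k` of a diagram: the number of nodes in rows `1, …, k`. -/
noncomputable def sigmaSet (S : Set (ℕ × ℕ)) (k : ℕ) : ℕ := (S ∩ {p | p.1 ≤ k}).ncard

/-- Dominance order on diagrams: `S ⊴ T` iff `σ_k(S) ≤ σ_k(T)` for all `k`. -/
def DomLE (S T : Set (ℕ × ℕ)) : Prop := ∀ k, sigmaSet S k ≤ sigmaSet T k

/-- `R_m = r_1(λ) + ⋯ + r_m(λ)` where `r_u(λ) = |λ ∩ L_u|`. -/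
noncomputable def Rlad (e : ℕ) (l : ℕ → ℕ) (m : ℕ) : ℕ :=
  ∑ u ∈ Finset.Icc 1 m, (cells l ∩ ladder e u).ncard

/-- The `s`-th entry of the ladder weight `j^λ`: it equals `m - 1 (mod e)` for the
unique `m` with `R_{m-1} < s ≤ R_m`. -/
noncomputable def ladderWeight (e : ℕ) (l : ℕ → ℕ) (s : ℕ) : ZMod e :=
  ((sInf {m : ℕ | s ≤ Rlad e l m} - 1 : ℕ) : ZMod e)

/-- A standard tableau of shape `S` (with `|S| = d`): a bijective labelling of the
nodes of `S` by `1, …, d`, increasing along rows and columns. -/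
def IsStandardTableau (S : Set (ℕ × ℕ)) (d : ℕ) (T : ℕ × ℕ → ℕ) : Prop :=
  (∀ p ∈ S, 1 ≤ T p ∧ T p ≤ d) ∧
  (∀ p ∈ S, ∀ q ∈ S, T p = T q → p = q) ∧
  (∀ s, 1 ≤ s → s ≤ d → ∃ p ∈ S, T p = s) ∧
  (∀ a b, (a, b) ∈ S → (a, b + 1) ∈ S → T (a, b) < T (a, b + 1)) ∧
  (∀ a b, (a, b) ∈ S → (a + 1, b) ∈ S → T (a, b) < T (a + 1, b))

/-- The degree `d_A(S)` of a removable node `A` of `S`: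
(number of addable nodes of `S` of the same residue strictly below `A`) minus
(number of removable nodes of `S` of the same residue strictly below `A`). -/
noncomputable def degNode (e : ℕ) (S : Set (ℕ × ℕ)) (A : ℕ × ℕ) : ℤ :=
  (({B | Addable S B ∧ res e B = res e A ∧ A.1 < B.1}).ncard : ℤ) -
  (({B | Removable S B ∧ res e B = res e A ∧ A.1 < B.1}).ncard : ℤ)

/-- The degree of a standard tableau: `deg(T) = Σ_{s=1}^d d_{A_s}(sh(T_{≤ s}))`,
written as a sum over the nodes `p` of `S` (with `s = T p`). -/
noncomputable def degTab (e : ℕ) (S : Set (ℕ × ℕ)) (T : ℕ × ℕ → ℕ) : ℤ :=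
  ∑ᶠ p ∈ S, degNode e {q | q ∈ S ∧ T q ≤ T p} p

/-- The set of standard tableaux of shape `S` (of size `d`) whose residue sequence
equals the ladder weight `j^λ` of the partition `l`; tableaux are normalized to
take the value `0` off `S`. -/
def LWTableaux (e d : ℕ) (l : ℕ → ℕ) (S : Set (ℕ × ℕ)) : Set ((ℕ × ℕ) → ℕ) :=
  {T | IsStandardTableau S d T ∧ (∀ p, p ∉ S → T p = 0) ∧
    ∀ p ∈ S, res e p = ladderWeight e l (T p)}

/-- The quantum integer `[n]_q = q^{n-1} + q^{n-3} + ⋯ + q^{1-n} ∈ ℤ[q, q⁻¹]`. -/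
noncomputable def qint (n : ℕ) : LaurentPolynomial ℤ :=
  ∑ k ∈ Finset.range n, LaurentPolynomial.T ((n : ℤ) - 1 - 2 * k)

/-- The quantum factorial `[n]_q! = [n]_q [n-1]_q ⋯ [1]_q`. -/
noncomputable def qfact (n : ℕ) : LaurentPolynomial ℤ :=
  ∏ k ∈ Finset.Icc 1 n, qint k

/- ======================= auxiliary lemmas ======================= -/

section AuxLemmas

lemma l_anti {l : ℕ → ℕ} (hl : ∀ r, 1 ≤ r → l (r + 1) ≤ l r) :
    ∀ a b, 1 ≤ a → a ≤ b → l b ≤ l a := by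
  intro a b ha hab
  induction b, hab using Nat.le_induction with
  | base => exact le_rfl
  | succ n hn ih => exact le_trans (hl n (by omega)) ih

lemma removable_cells_iff {l : ℕ → ℕ} (hl : ∀ r, 1 ≤ r → l (r + 1) ≤ l r) {x y : ℕ} :
    Removable (cells l) (x, y) ↔ 1 ≤ x ∧ 1 ≤ y ∧ y = l x ∧ l (x + 1) < l x := by
  constructor
  · rintro ⟨⟨hx, hy, hyle⟩, hd⟩
    replace hx : 1 ≤ x := hx
    replace hy : 1 ≤ y := hy
    replace hyle : y ≤ l x := hyle
    refine ⟨hx, hy, ?_, ?_⟩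
    · by_contra hne
      have hmem : ((x, y + 1) : ℕ × ℕ) ∈ cells l \ {(x, y)} := by
        refine ⟨⟨hx, show 1 ≤ y + 1 by omega, show y + 1 ≤ l x by omega⟩, ?_⟩
        simp only [Set.mem_singleton_iff, Prod.mk.injEq]
        omega
      have h2 := hd.2 x (y + 1) x y hmem hx le_rfl hy (by omega)
      simp at h2
    · by_contra hge
      have hyx : y = l x := by
        by_contra hne
        have hmem : ((x, y + 1) : ℕ × ℕ) ∈ cells l \ {(x, y)} := by
          refine ⟨⟨hx, show 1 ≤ y + 1 by omega, show y + 1 ≤ l x by omega⟩, ?_⟩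
          simp only [Set.mem_singleton_iff, Prod.mk.injEq]
          omega
        have h2 := hd.2 x (y + 1) x y hmem hx le_rfl hy (by omega)
        simp at h2
      have hmem : ((x + 1, y) : ℕ × ℕ) ∈ cells l \ {(x, y)} := by
        refine ⟨⟨show 1 ≤ x + 1 by omega, hy, show y ≤ l (x + 1) by omega⟩, ?_⟩
        simp only [Set.mem_singleton_iff, Prod.mk.injEq]
        omega
      have h2 := hd.2 (x + 1) y x y hmem hx (by omega) hy le_rfl
      simp at h2
  · rintro ⟨hx, hy, hyeq, hlt⟩
    refine ⟨⟨hx, hy, le_of_eq hyeq⟩, ?_, ?_⟩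
    · rintro p ⟨hp, -⟩; exact ⟨hp.1, hp.2.1⟩
    · rintro a b a' b' ⟨⟨ha, hb, hble⟩, hne⟩ ha' ha'a hb' hb'b
      replace ha : 1 ≤ a := ha
      replace hb : 1 ≤ b := hb
      replace hble : b ≤ l a := hble
      refine ⟨⟨ha', hb', ?_⟩, ?_⟩
      · calc b' ≤ b := hb'b
          _ ≤ l a := hble
          _ ≤ l a' := l_anti hl a' a ha' ha'a
      · simp only [Set.mem_singleton_iff, Prod.mk.injEq] at hne ⊢
        rintro ⟨rfl, rfl⟩
        rcases Nat.eq_or_lt_of_le ha'a with heq | halt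
        · apply hne
          have h1 : l a = l a' := by rw [heq]
          exact ⟨heq.symm, by omega⟩
        · have h1 : l a ≤ l (a' + 1) := l_anti hl (a' + 1) a (by omega) (by omega)
          omega

lemma addable_cells_iff {l : ℕ → ℕ} (hl : ∀ r, 1 ≤ r → l (r + 1) ≤ l r) {x y : ℕ} :
    Addable (cells l) (x, y) ↔ 1 ≤ x ∧ y = l x + 1 ∧ (x = 1 ∨ y ≤ l (x - 1)) := by
  constructor
  · rintro ⟨hnot, hd⟩
    have hB : ((x, y) : ℕ × ℕ) ∈ cells l ∪ {(x, y)} := Or.inr rfl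
    have hx : 1 ≤ x := (hd.1 _ hB).1
    have hy : 1 ≤ y := (hd.1 _ hB).2
    have hygt : l x < y := by
      by_contra h
      exact hnot ⟨hx, hy, show y ≤ l x by omega⟩
    have hyle : y ≤ l x + 1 := by
      by_contra h
      have h2 := hd.2 x y x (y - 1) hB hx le_rfl (by omega) (by omega)
      rcases h2 with h2 | h2
      · have h3 : y - 1 ≤ l x := h2.2.2
        omega
      · simp only [Set.mem_singleton_iff, Prod.mk.injEq] at h2; omega
    refine ⟨hx, by omega, ?_⟩
    rcases Nat.eq_or_lt_of_le hx with h1 | h1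
    · exact Or.inl h1.symm
    · right
      have h2 := hd.2 x y (x - 1) y hB (by omega) (by omega) hy le_rfl
      rcases h2 with h2 | h2
      · have h3 : y ≤ l (x - 1) := h2.2.2
        exact h3
      · simp only [Set.mem_singleton_iff, Prod.mk.injEq] at h2; omega
  · rintro ⟨hx, hyeq, hcase⟩
    refine ⟨fun h => by have h3 : y ≤ l x := h.2.2; omega, ?_, ?_⟩
    · rintro p (hp | hp)
      · exact ⟨hp.1, hp.2.1⟩
      · simp only [Set.mem_singleton_iff] at hp
        subst hp
        exact ⟨hx, show 1 ≤ y by omega⟩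
    · rintro a b a' b' hab ha' ha'a hb' hb'b
      rcases hab with hab | hab
      · exact Or.inl ⟨ha', hb',
          le_trans hb'b (le_trans (hab.2.2 : b ≤ l a) (l_anti hl a' a ha' ha'a))⟩
      · simp only [Set.mem_singleton_iff, Prod.mk.injEq] at hab
        obtain ⟨hax, hby⟩ := hab
        by_cases hB : a' = x ∧ b' = y
        · exact Or.inr (by simp only [Set.mem_singleton_iff, Prod.mk.injEq]; exact hB)
        · left
          rcases Nat.eq_or_lt_of_le ha'a with heq | halt
          · -- a' = a = x
            have hax' : a' = x := by omega
            have hbne : b' ≠ y := fun h => hB ⟨hax', h⟩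
            have h2 : l a' = l x := by rw [hax']
            exact ⟨ha', hb', show b' ≤ l a' by omega⟩
          · -- a' < a = x
            have hxc : y ≤ l (x - 1) := by
              rcases hcase with h | h
              · omega
              · exact h
            have h1 : l (x - 1) ≤ l a' := l_anti hl a' (x - 1) ha' (by omega)
            exact ⟨ha', hb', show b' ≤ l a' by omega⟩

lemma mem_ladder_iff {e m : ℕ} {p : ℕ × ℕ} :
    p ∈ ladder e m ↔ 1 ≤ p.1 ∧ 1 ≤ p.2 ∧ p.2 + (p.1 - 1) * (e - 1) = m := by
  constructor
  · rintro ⟨k, hk, rfl⟩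
    refine ⟨show 1 ≤ 1 + k by omega, show 1 ≤ m - k * (e - 1) by omega, ?_⟩
    show (m - k * (e - 1)) + (1 + k - 1) * (e - 1) = m
    simp only [Nat.add_sub_cancel_left]
    omega
  · rintro ⟨h1, h2, h3⟩
    refine ⟨p.1 - 1, by omega, ?_⟩
    rw [Prod.ext_iff]
    constructor
    · show p.1 = 1 + (p.1 - 1)
      omega
    · show p.2 = m - (p.1 - 1) * (e - 1)
      omega

lemma res_of_ladder {e x y m : ℕ} (he : 1 ≤ e) (hx : 1 ≤ x)
    (h : y + (x - 1) * (e - 1) = m) : res e (x, y) = (m : ZMod e) - 1 := by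
  obtain ⟨x', rfl⟩ : ∃ x', x = x' + 1 := ⟨x - 1, by omega⟩
  obtain ⟨e', rfl⟩ : ∃ e', e = e' + 1 := ⟨e - 1, by omega⟩
  simp only [Nat.add_sub_cancel] at h
  subst h
  show ((y : ZMod (e' + 1))) - ((x' + 1 : ℕ) : ZMod (e' + 1)) = _
  have he0 : ((e' + 1 : ℕ) : ZMod (e' + 1)) = 0 := ZMod.natCast_self (e' + 1)
  push_cast
  push_cast at he0
  linear_combination (-(x' : ZMod (e' + 1))) * he0

lemma cast_contra {e a d : ℕ} (h1 : 1 ≤ d) (h2 : d < e)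
    (h : ((a : ℕ) : ZMod e) = ((a + d : ℕ) : ZMod e)) : False := by
  haveI : NeZero e := ⟨by omega⟩
  have hd : ((d : ℕ) : ZMod e) = 0 := by
    push_cast at h
    linear_combination -h
  rw [ZMod.natCast_eq_zero_iff] at hd
  have := Nat.le_of_dvd (by omega) hd
  omega

lemma ncard_Iio_fin {n : ℕ} (p : Fin n) : {j : Fin n | j < p}.ncard = (p : ℕ) := by
  have h : {j : Fin n | j < p} = ↑(Finset.Iio p) := by
    ext j; simp
  rw [h, Set.ncard_coe_finset, Fin.card_Iio]

lemma mul_pred_nat (P q : ℕ) (h : 1 ≤ P) : P * q = (P - 1) * q + q := by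
  obtain ⟨p', rfl⟩ : ∃ p', P = p' + 1 := ⟨P - 1, by omega⟩
  simp only [Nat.add_sub_cancel]
  ring

end AuxLemmas

/- ======================= permutation statistics ======================= -/

section PermStat

noncomputable def mstat {n : ℕ} (σ : Equiv.Perm (Fin n)) (j : Fin n) : ℕ :=
  {j' : Fin n | j' < j ∧ σ j' < σ j}.ncard

noncomputable def Sstat {n : ℕ} (σ : Equiv.Perm (Fin n)) : ℤ :=
  ∑ j, (2 * (mstat σ j : ℤ) - ((σ j : ℕ) : ℤ))

def Phi {n : ℕ} (p : Fin (n + 1)) (ε : Equiv.Perm (Fin n)) : Equiv.Perm (Fin (n + 1)) :=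
  ((finSuccEquiv' p).trans (Equiv.optionCongr ε)).trans (finSuccEquiv' (Fin.last n)).symm

lemma Phi_self {n : ℕ} (p : Fin (n + 1)) (ε : Equiv.Perm (Fin n)) :
    Phi p ε p = Fin.last n := by
  simp [Phi, finSuccEquiv'_at, finSuccEquiv'_symm_none]

lemma Phi_succAbove {n : ℕ} (p : Fin (n + 1)) (ε : Equiv.Perm (Fin n)) (i : Fin n) :
    Phi p ε (p.succAbove i) = (ε i).castSucc := by
  simp [Phi, finSuccEquiv'_succAbove, finSuccEquiv'_symm_some, Fin.succAbove_last]

lemma Phi_bijective {n : ℕ} :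
    Function.Bijective (fun pe : Fin (n + 1) × Equiv.Perm (Fin n) => Phi pe.1 pe.2) := by
  constructor
  · rintro ⟨p, ε⟩ ⟨p', ε'⟩ h
    simp only at h
    have hp : p = p' := by
      have h1 : Phi p ε p' = Fin.last n := by rw [h]; exact Phi_self p' ε'
      exact (Phi p ε).injective ((Phi_self p ε).trans h1.symm)
    subst hp
    suffices hε : ε = ε' by rw [hε]
    apply Equiv.ext
    intro i
    have h2 := congrArg (fun g : Equiv.Perm (Fin (n + 1)) => g (p.succAbove i)) h
    simp only [Phi_succAbove] at h2
    exact Fin.castSucc_injective n h2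
  · intro σ
    set p := σ.symm (Fin.last n) with hp
    have hσp : σ p = Fin.last n := σ.apply_symm_apply _
    have hne : ∀ i : Fin n, σ (p.succAbove i) ≠ Fin.last n := by
      intro i hEq
      exact Fin.succAbove_ne p i (σ.injective (hEq.trans hσp.symm))
    have hinj : Function.Injective (fun i : Fin n => (σ (p.succAbove i)).castPred (hne i)) := by
      intro i i' hii
      simp only at hii
      have h3 : σ (p.succAbove i) = σ (p.succAbove i') := by
        have := congrArg Fin.castSucc hii
        rwa [Fin.castSucc_castPred, Fin.castSucc_castPred] at this
      exact Fin.succAbove_right_injective (σ.injective h3)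
    refine ⟨⟨p, Equiv.ofBijective _ (Finite.injective_iff_bijective.mp hinj)⟩, ?_⟩
    simp only
    apply Equiv.ext
    intro x
    rcases eq_or_ne x p with rfl | hx
    · rw [Phi_self, hσp]
    · obtain ⟨i, rfl⟩ := Fin.exists_succAbove_eq hx
      rw [Phi_succAbove]
      show ((σ (p.succAbove i)).castPred (hne i)).castSucc = _
      rw [Fin.castSucc_castPred]

lemma mstat_Phi_self {n : ℕ} (p : Fin (n + 1)) (ε : Equiv.Perm (Fin n)) :
    mstat (Phi p ε) p = (p : ℕ) := by
  have hset : {j' : Fin (n + 1) | j' < p ∧ Phi p ε j' < Phi p ε p} = {j' | j' < p} := by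
    ext j'
    simp only [Set.mem_setOf_eq, Phi_self]
    constructor
    · exact fun h => h.1
    · intro h
      refine ⟨h, ?_⟩
      rw [Fin.lt_last_iff_ne_last]
      intro hEq
      have hjp : j' = p := (Phi p ε).injective (hEq.trans (Phi_self p ε).symm)
      exact absurd (hjp ▸ h) (lt_irrefl p)
  unfold mstat
  rw [hset, ncard_Iio_fin]

lemma mstat_Phi_succAbove {n : ℕ} (p : Fin (n + 1)) (ε : Equiv.Perm (Fin n)) (i : Fin n) :
    mstat (Phi p ε) (p.succAbove i) = mstat ε i := by
  have hset : {j' : Fin (n + 1) | j' < p.succAbove i ∧ Phi p ε j' < Phi p ε (p.succAbove i)}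
      = p.succAbove '' {i' : Fin n | i' < i ∧ ε i' < ε i} := by
    ext j'
    simp only [Set.mem_setOf_eq, Set.mem_image, Phi_succAbove]
    constructor
    · rintro ⟨h1, h2⟩
      have hjne : j' ≠ p := by
        rintro rfl
        rw [Phi_self] at h2
        exact absurd h2 (lt_asymm (Fin.castSucc_lt_last (ε i)))
      obtain ⟨i', rfl⟩ := Fin.exists_succAbove_eq hjne
      rw [Phi_succAbove] at h2
      exact ⟨i', ⟨Fin.succAbove_lt_succAbove_iff.mp h1, Fin.castSucc_lt_castSucc_iff.mp h2⟩, rfl⟩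
    · rintro ⟨i', ⟨h1, h2⟩, rfl⟩
      rw [Phi_succAbove]
      exact ⟨Fin.succAbove_lt_succAbove_iff.mpr h1, Fin.castSucc_lt_castSucc_iff.mpr h2⟩
  unfold mstat
  rw [hset, Set.ncard_image_of_injective _ Fin.succAbove_right_injective]

lemma Sstat_Phi {n : ℕ} (p : Fin (n + 1)) (ε : Equiv.Perm (Fin n)) :
    Sstat (Phi p ε) = (2 * (p : ℤ) - (n : ℤ)) + Sstat ε := by
  unfold Sstat
  rw [Fin.sum_univ_succAbove (fun j => 2 * (mstat (Phi p ε) j : ℤ) - ((Phi p ε j : ℕ) : ℤ)) p]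
  congr 1
  · rw [mstat_Phi_self, Phi_self, Fin.val_last]
  · apply Finset.sum_congr rfl
    intro i _
    rw [mstat_Phi_succAbove, Phi_succAbove, Fin.coe_castSucc]

lemma sum_T_Sstat (n : ℕ) :
    ∑ σ : Equiv.Perm (Fin n), LaurentPolynomial.T (R := ℤ) (Sstat σ) = qfact n := by
  induction n with
  | zero =>
    have h1 : ∀ σ : Equiv.Perm (Fin 0), Sstat σ = 0 := by
      intro σ; unfold Sstat; simp
    simp only [h1, LaurentPolynomial.T_zero, Finset.sum_const, Finset.card_univ, nsmul_eq_mul,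
      mul_one]
    rw [show qfact 0 = 1 by unfold qfact; rw [Finset.Icc_eq_empty (by omega), Finset.prod_empty]]
    simp
  | succ n ih =>
    rw [← Fintype.sum_bijective _ (Phi_bijective (n := n))
      (fun pe => LaurentPolynomial.T (R := ℤ) (Sstat (Phi pe.1 pe.2)))
      (fun σ => LaurentPolynomial.T (R := ℤ) (Sstat σ)) (fun pe => rfl)]
    rw [Fintype.sum_prod_type]
    have hterm : ∀ (p : Fin (n + 1)) (ε : Equiv.Perm (Fin n)),
        LaurentPolynomial.T (R := ℤ) (Sstat (Phi p ε))
          = LaurentPolynomial.T (2 * (p : ℤ) - (n : ℤ)) * LaurentPolynomial.T (Sstat ε) := by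
      intro p ε
      rw [Sstat_Phi, LaurentPolynomial.T_add]
    simp_rw [hterm]
    rw [← Finset.sum_mul_sum]
    rw [ih]
    have hq : (∑ p : Fin (n + 1), LaurentPolynomial.T (R := ℤ) (2 * (p : ℤ) - (n : ℤ)))
        = qint (n + 1) := by
      rw [Fin.sum_univ_eq_sum_range (fun k => LaurentPolynomial.T (R := ℤ) (2 * (k : ℤ) - (n : ℤ)))]
      unfold qint
      rw [← Finset.sum_range_reflect]
      apply Finset.sum_congr rfl
      intro k hk
      rw [Finset.mem_range] at hk
      congr 1
      have : ((n + 1 - 1 - k : ℕ) : ℤ) = (n : ℤ) - (k : ℤ) := by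
        have : n + 1 - 1 - k = n - k := by omega
        rw [this]
        push_cast [Nat.cast_sub (by omega : k ≤ n)]
        ring
      rw [this]
      push_cast
      ring
    rw [hq]
    unfold qfact
    rw [Finset.prod_Icc_succ_top (by omega : 1 ≤ n + 1)]
    ring

end PermStat

/- ======================= the degree computation ======================= -/

lemma degNode_eq
    (e r : ℕ) (he : 2 ≤ e) (l : ℕ → ℕ)
    (hl : IsPartitionFun l) (hrestr : IsRestricted e l)
    (t : ℕ)
    (htmax : ∀ u, (cells l ∩ ladder e u).Nonempty → u ≤ t)
    (A : Fin r → ℕ × ℕ)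
    (hAmem : ∀ j, A j ∈ cells l ∩ ladder e t)
    (hAinj : Function.Injective A)
    (hAsurj : ∀ p ∈ cells l ∩ ladder e t, ∃ j, A j = p)
    (hAord : ∀ u v : Fin r, u < v → (A v).1 < (A u).1)
    (hr0 : 0 < r)
    (σ : Equiv.Perm (Fin r)) (j : Fin r) :
    degNode e (cells l \ (fun k => A (σ k)) '' {k : Fin r | k < j}) (A (σ j)) =
      2 * (mstat σ j : ℤ) - ((σ j : ℕ) : ℤ) := by
  classical
  have hl1 := hl.1
  have hanti : ∀ a b, 1 ≤ a → a ≤ b → l b ≤ l a := l_anti hl.1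
  have hAcell : ∀ k, 1 ≤ (A k).1 ∧ 1 ≤ (A k).2 ∧ (A k).2 ≤ l (A k).1 := fun k => (hAmem k).1
  have hAlad : ∀ k, (A k).2 + ((A k).1 - 1) * (e - 1) = t :=
    fun k => (mem_ladder_iff.mp (hAmem k).2).2.2
  have hAval : ∀ k, (A k).2 = l (A k).1 := by
    intro k
    by_contra hne
    have hc := hAcell k
    have h1 : ((A k).1, (A k).2 + 1) ∈ cells l :=
      ⟨hc.1, show 1 ≤ (A k).2 + 1 by omega,
        show (A k).2 + 1 ≤ l (A k).1 by have := hc.2.2; omega⟩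
    have h2 : ((A k).1, (A k).2 + 1) ∈ ladder e (t + 1) :=
      mem_ladder_iff.mpr ⟨hc.1, show 1 ≤ (A k).2 + 1 by omega,
        show ((A k).2 + 1) + ((A k).1 - 1) * (e - 1) = t + 1 by have := hAlad k; omega⟩
    have := htmax (t + 1) ⟨_, h1, h2⟩
    omega
  have hft_eq : ∀ k, l (A k).1 + ((A k).1 - 1) * (e - 1) = t := by
    intro k
    have h := hAlad k
    rw [hAval k] at h
    exact h
  have hl1row : ∀ k, 1 ≤ l (A k).1 := by
    intro k
    have h := (hAcell k).2.1
    rw [hAval k] at h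
    exact h
  have hfstep : ∀ y, 1 ≤ y → l y + (y - 1) * (e - 1) ≤ l (y + 1) + (y + 1 - 1) * (e - 1) := by
    intro y hy
    obtain ⟨z, rfl⟩ : ∃ z, y = z + 1 := ⟨y - 1, by omega⟩
    have h1 := hrestr (z + 1) (by omega)
    have h2 : (z + 1 + 1 - 1) * (e - 1) = (z + 1 - 1) * (e - 1) + (e - 1) := by
      simp only [Nat.add_sub_cancel]
      ring
    omega
  have hfmono : ∀ x y, 1 ≤ x → x ≤ y → l x + (x - 1) * (e - 1) ≤ l y + (y - 1) * (e - 1) := by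
    intro x y hx hxy
    induction y, hxy using Nat.le_induction with
    | base => exact le_rfl
    | succ y hy ih => exact le_trans ih (hfstep y (by omega))
  have hfmax : ∀ x, 1 ≤ x → 1 ≤ l x → l x + (x - 1) * (e - 1) ≤ t := by
    intro x hx hlx
    exact htmax _ ⟨(x, l x), ⟨hx, hlx, le_rfl⟩, mem_ladder_iff.mpr ⟨hx, hlx, rfl⟩⟩
  have hsurj' : ∀ x, 1 ≤ x → 1 ≤ l x → l x + (x - 1) * (e - 1) = t → ∃ k : Fin r, (A k).1 = x := by
    intro x hx hlx hfx
    obtain ⟨k, hk⟩ := hAsurj (x, l x) ⟨⟨hx, hlx, le_rfl⟩, mem_ladder_iff.mpr ⟨hx, hlx, hfx⟩⟩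
    exact ⟨k, by rw [hk]⟩
  have hρlt : ∀ u v : Fin r, (A u).1 < (A v).1 ↔ v < u := by
    intro u v
    constructor
    · intro h
      rcases lt_trichotomy v u with h' | rfl | h'
      · exact h'
      · exact absurd h (lt_irrefl _)
      · have := hAord u v h'
        omega
    · exact fun h' => hAord v u h'
  have hrow_inj : ∀ u v : Fin r, (A u).1 = (A v).1 → u = v := by
    intro u v h
    rcases lt_trichotomy u v with h' | h' | h'
    · have := hAord u v h'; omega
    · exact h'
    · have := hAord v u h'; omega
  have hstep' : ∀ x, 1 ≤ x → l x + (x - 1) * (e - 1) = t →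
      l (x + 1) + (x + 1 - 1) * (e - 1) = t → l x = l (x + 1) + (e - 1) := by
    intro x hx h1 h2
    obtain ⟨z, rfl⟩ : ∃ z, x = z + 1 := ⟨x - 1, by omega⟩
    have h3 : (z + 1 + 1 - 1) * (e - 1) = (z + 1 - 1) * (e - 1) + (e - 1) := by
      simp only [Nat.add_sub_cancel]
      ring
    omega
  -- the bottom row P
  have hi0 : (0 : ℕ) < r := hr0
  set i0 : Fin r := ⟨0, hi0⟩ with hi0def
  have hP1 : 1 ≤ (A i0).1 := (hAcell i0).1
  have hρ0max : ∀ k, (A k).1 ≤ (A i0).1 := by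
    intro k
    by_contra h
    have h2 := (hρlt i0 k).mp (by omega)
    rw [Fin.lt_def] at h2
    simp only [hi0def] at h2
    omega
  have hbelow : ∀ x, (A i0).1 < x → l x = 0 := by
    intro x hPx
    by_contra h
    have hlx : 1 ≤ l x := by omega
    have hx1 : 1 ≤ x := by omega
    have hfx : l x + (x - 1) * (e - 1) = t := by
      have hub := hfmax x hx1 hlx
      have hlb := hfmono (A i0).1 x hP1 (by omega)
      have h1 := hft_eq i0
      omega
    obtain ⟨k, hk⟩ := hsurj' x hx1 hlx hfx
    have := hρ0max k
    omega
  have hlP : l (A i0).1 < e := by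
    have h1 := hrestr (A i0).1 hP1
    have h2 := hbelow ((A i0).1 + 1) (by omega)
    omega
  have hrow : ∀ (m : ℕ) (hm : m < r), (A ⟨m, hm⟩).1 + m = (A i0).1 := by
    intro m
    induction m with
    | zero =>
      intro hm
      simp only [Nat.add_zero]
      rfl
    | succ m ihm =>
      intro hm
      have hm' : m < r := by omega
      have ih := ihm hm'
      have hlt : (A ⟨m + 1, hm⟩).1 < (A ⟨m, hm'⟩).1 :=
        hAord ⟨m, hm'⟩ ⟨m + 1, hm⟩ (by rw [Fin.lt_def]; simp)
      by_contra hne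
      have hx1 : 1 ≤ (A ⟨m + 1, hm⟩).1 := (hAcell _).1
      -- the skipped row x
      have hxlt : (A ⟨m + 1, hm⟩).1 < (A ⟨m, hm'⟩).1 - 1 := by omega
      have hx1' : 1 ≤ (A ⟨m, hm'⟩).1 - 1 := by omega
      have hxP : (A ⟨m, hm'⟩).1 - 1 ≤ (A i0).1 := by omega
      have hlx : 1 ≤ l ((A ⟨m, hm'⟩).1 - 1) :=
        le_trans (hl1row i0) (hanti _ _ hx1' hxP)
      have hfx : l ((A ⟨m, hm'⟩).1 - 1) + ((A ⟨m, hm'⟩).1 - 1 - 1) * (e - 1) = t := by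
        have hub := hfmax _ hx1' hlx
        have hlb := hfmono (A ⟨m + 1, hm⟩).1 ((A ⟨m, hm'⟩).1 - 1) hx1 (by omega)
        have h1 := hft_eq ⟨m + 1, hm⟩
        omega
      obtain ⟨k, hk⟩ := hsurj' _ hx1' hlx hfx
      have t1 : (⟨m, hm'⟩ : Fin r) < k := (hρlt k ⟨m, hm'⟩).mp (by omega)
      have t2 : k < (⟨m + 1, hm⟩ : Fin r) := (hρlt ⟨m + 1, hm⟩ k).mp (by omega)
      rw [Fin.lt_def] at t1 t2
      simp only at t1 t2
      omega
  have hrowk : ∀ k : Fin r, (A k).1 + (k : ℕ) = (A i0).1 := by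
    intro k
    have := hrow k.1 k.2
    simpa using this
  haveI : NeZero e := ⟨by omega⟩
  have hres : ∀ k, res e (A k) = (t : ZMod e) - 1 := fun k =>
    res_of_ladder (by omega) (hAcell k).1 (hAlad k)
  -- ======== the modified partition ========
  set Rem : Set ℕ := (fun k : Fin r => (A k).1) '' (σ '' {j' : Fin r | j' < j}) with hRemdef
  set lν : ℕ → ℕ := fun x => if x ∈ Rem then l x - 1 else l x with hlνdef
  have hRem_iff : ∀ x, x ∈ Rem ↔ ∃ j' : Fin r, j' < j ∧ (A (σ j')).1 = x := by
    intro x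
    rw [hRemdef]
    simp only [Set.mem_image, Set.mem_setOf_eq]
    constructor
    · rintro ⟨k, ⟨j', hj', rfl⟩, rfl⟩
      exact ⟨j', hj', rfl⟩
    · rintro ⟨j', hj', h⟩
      exact ⟨σ j', ⟨j', hj', rfl⟩, h⟩
  have haRem : (A (σ j)).1 ∉ Rem := by
    rw [hRem_iff]
    rintro ⟨j', hj', hj'a⟩
    have h1 : σ j' = σ j := hrow_inj _ _ hj'a
    have h2 : j' = j := σ.injective h1
    exact absurd (h2 ▸ hj') (lt_irrefl j)
  have hRem_P : ∀ x ∈ Rem, x ≤ (A i0).1 ∧ 1 ≤ x ∧ 1 ≤ l x ∧ l x + (x - 1) * (e - 1) = t := by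
    intro x hx
    obtain ⟨j', hj', hk⟩ := (hRem_iff x).mp hx
    rcases hk with rfl
    exact ⟨hρ0max _, (hAcell _).1, hl1row _, hft_eq _⟩
  have hlν_le : ∀ x, lν x ≤ l x := by
    intro x
    rw [hlνdef]
    simp only
    split <;> omega
  have hlν_in : ∀ x, x ∈ Rem → lν x = l x - 1 := by
    intro x hx
    rw [hlνdef]
    simp only [if_pos hx]
  have hlν_out : ∀ x, x ∉ Rem → lν x = l x := by
    intro x hx
    rw [hlνdef]
    simp only [if_neg hx]
  -- squeeze
  have hft : ∀ x0 x, 1 ≤ x0 → x0 ≤ x → x ≤ (A i0).1 → 1 ≤ l x0 →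
      l x0 + (x0 - 1) * (e - 1) = t → 1 ≤ l x ∧ l x + (x - 1) * (e - 1) = t := by
    intro x0 x h1 h2 h3 h4 h5
    have hx1 : 1 ≤ x := le_trans h1 h2
    have hlx : 1 ≤ l x := le_trans (hl1row i0) (hanti x (A i0).1 hx1 h3)
    refine ⟨hlx, ?_⟩
    have hub := hfmax x hx1 hlx
    have hlb := hfmono x0 x h1 h2
    omega
  have hlν_anti : ∀ x, 1 ≤ x → lν (x + 1) ≤ lν x := by
    intro x hx
    by_cases hxR : x ∈ Rem
    · obtain ⟨hxP, hx1, hlx, hfx⟩ := hRem_P x hxR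
      rw [hlν_in x hxR]
      by_cases hxP' : x = (A i0).1
      · have h0 := hbelow (x + 1) (by omega)
        have h1 := hlν_le (x + 1)
        omega
      · have hnext := hft x (x + 1) hx1 (by omega) (by omega) hlx hfx
        have hst := hstep' x hx1 hfx hnext.2
        have h1 := hlν_le (x + 1)
        omega
    · rw [hlν_out x hxR]
      exact le_trans (hlν_le (x + 1)) (hl1 x hx)
  -- cells of lν
  have hcellsν : cells lν = cells l \ (fun k => A (σ k)) '' {k : Fin r | k < j} := by
    ext ⟨x, y⟩
    simp only [cells, Set.mem_setOf_eq, Set.mem_diff, Set.mem_image]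
    constructor
    · rintro ⟨hx, hy, hyle⟩
      have hyl : y ≤ l x := le_trans hyle (hlν_le x)
      refine ⟨⟨hx, hy, hyl⟩, ?_⟩
      rintro ⟨k, hk, hAk⟩
      have hxR : x ∈ Rem := (hRem_iff x).mpr ⟨k, hk, by rw [hAk]⟩
      have hyv : y = l x := by
        have h1 := hAval (σ k)
        rw [hAk] at h1
        simpa using h1
      rw [hlν_in x hxR] at hyle
      omega
    · rintro ⟨⟨hx, hy, hyl⟩, hnot⟩
      refine ⟨hx, hy, ?_⟩
      by_cases hxR : x ∈ Rem
      · rw [hlν_in x hxR]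
        obtain ⟨j', hj', hrowx⟩ := (hRem_iff x).mp hxR
        have hAj' : A (σ j') = (x, l x) := by
          rw [← hrowx, ← hAval (σ j')]
        have hyne : y ≠ l x := by
          intro hye
          exact hnot ⟨j', hj', by rw [hAj', hye]⟩
        omega
      · rw [hlν_out x hxR]
        exact hyl
  -- facts about the row of A (σ j)
  have ha1 : 1 ≤ (A (σ j)).1 := (hAcell (σ j)).1
  have haP : (A (σ j)).1 ≤ (A i0).1 := hρ0max (σ j)
  have hfa : l (A (σ j)).1 + ((A (σ j)).1 - 1) * (e - 1) = t := hft_eq (σ j)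
  have hla1 : 1 ≤ l (A (σ j)).1 := hl1row (σ j)
  -- ======== the addable set ========
  have hSetAdd : {B : ℕ × ℕ | Addable (cells lν) B ∧ res e B = res e (A (σ j)) ∧ (A (σ j)).1 < B.1}
      = A '' ((σ '' {j' : Fin r | j' < j}) ∩ {k : Fin r | k < σ j}) := by
    ext B
    obtain ⟨x, y⟩ := B
    simp only [Set.mem_setOf_eq, Set.mem_image, Set.mem_inter_iff]
    constructor
    · rintro ⟨hadd, hres', hrow'⟩
      rw [addable_cells_iff hlν_anti] at hadd
      obtain ⟨hx, hyeq, hcase⟩ := hadd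
      have hx2 : 2 ≤ x := by omega
      have hyl : y ≤ lν (x - 1) := by
        rcases hcase with h | h
        · omega
        · exact h
      by_cases hxP : (A i0).1 + 1 < x
      · exfalso
        have h0 : l (x - 1) = 0 := hbelow (x - 1) (by omega)
        have h1 := hlν_le (x - 1)
        omega
      · by_cases hxP1 : x = (A i0).1 + 1
        · exfalso
          subst hxP1
          have hnR : (A i0).1 + 1 ∉ Rem := fun h => by
            have := (hRem_P _ h).1; omega
          have h0 : l ((A i0).1 + 1) = 0 := hbelow ((A i0).1 + 1) (by omega)
          have hy1 : y = 1 := by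
            rw [hlν_out _ hnR, h0] at hyeq
            omega
          have hres1 : res e ((A i0).1 + 1, y)
              = ((1 + ((A i0).1 + 1 - 1) * (e - 1) : ℕ) : ZMod e) - 1 :=
            res_of_ladder (by omega) (by omega) (by rw [hy1])
          rw [hres1, hres (σ j), sub_left_inj] at hres'
          have hPmul : (A i0).1 * (e - 1) = ((A i0).1 - 1) * (e - 1) + (e - 1) :=
            mul_pred_nat _ _ hP1
          have harith : 1 + ((A i0).1 + 1 - 1) * (e - 1) = t + (e - l (A i0).1) := by
            simp only [Nat.add_sub_cancel]
            have h1 := hft_eq i0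
            have h2 := hl1row i0
            omega
          rw [harith] at hres'
          exact cast_contra (d := e - l (A i0).1) (by have := hl1row i0; omega)
            (by have := hl1row i0; omega) hres'.symm
        · -- a < x ≤ P
          have hxP2 : x ≤ (A i0).1 := by omega
          have hfx := hft (A (σ j)).1 x ha1 (by omega) hxP2 hla1 hfa
          by_cases hxR : x ∈ Rem
          · obtain ⟨j', hj', hrowx⟩ := (hRem_iff x).mp hxR
            have hy : y = l x := by
              rw [hlν_in x hxR] at hyeq
              have := hfx.1
              omega
            refine ⟨σ j', ⟨⟨j', hj', rfl⟩, ?_⟩, ?_⟩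
            · exact (hρlt (σ j) (σ j')).mp (by omega)
            · rw [hy, ← hrowx, ← hAval (σ j')]
          · exfalso
            have hy : y = l x + 1 := by
              rw [hlν_out x hxR] at hyeq
              omega
            have hres1 : res e (x, y) = ((t + 1 : ℕ) : ZMod e) - 1 :=
              res_of_ladder (by omega) (by omega) (by rw [hy]; have := hfx.2; omega)
            rw [hres1, hres (σ j), sub_left_inj] at hres'
            exact cast_contra (d := 1) le_rfl (by omega) hres'.symm
    · rintro ⟨k, ⟨⟨j', hj', rfl⟩, hks⟩, hAk⟩
      obtain ⟨hx1, hy1⟩ : (A (σ j')).1 = x ∧ (A (σ j')).2 = y := by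
        rw [hAk]; exact ⟨rfl, rfl⟩
      subst hx1
      subst hy1
      have hrowgt : (A (σ j)).1 < (A (σ j')).1 := (hρlt (σ j) (σ j')).mpr hks
      have hxR : (A (σ j')).1 ∈ Rem := (hRem_iff _).mpr ⟨j', hj', rfl⟩
      have hx2 : 2 ≤ (A (σ j')).1 := by omega
      have hrw : (A (σ j')).1 - 1 + 1 = (A (σ j')).1 := by omega
      refine ⟨?_, ?_, by simpa using hrowgt⟩
      · rw [addable_cells_iff hlν_anti]
        refine ⟨by omega, ?_, Or.inr ?_⟩
        · rw [hAval (σ j'), hlν_in _ hxR]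
          have := hl1row (σ j')
          omega
        · -- (A (σ j')).2 ≤ lν ((A (σ j')).1 - 1)
          rw [hAval (σ j')]
          have hbP : (A (σ j')).1 - 1 ≤ (A i0).1 := by
            have := hρ0max (σ j')
            omega
          by_cases hbR : (A (σ j')).1 - 1 ∈ Rem
          · have h1 := (hRem_P _ hbR).2.2.2
            have h2' : l ((A (σ j')).1 - 1 + 1) + ((A (σ j')).1 - 1 + 1 - 1) * (e - 1) = t := by
              rw [hrw]
              exact hft_eq (σ j')
            have hst := hstep' ((A (σ j')).1 - 1) (by omega) h1 h2'
            rw [hrw] at hst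
            rw [hlν_in _ hbR]
            omega
          · rw [hlν_out _ hbR]
            have h1 := hl1 ((A (σ j')).1 - 1) (by omega)
            rw [hrw] at h1
            exact h1
      · show res e (A (σ j')) = res e (A (σ j))
        rw [hres (σ j'), hres (σ j)]
  -- ======== the removable set ========
  have hSetRem : {B : ℕ × ℕ | Removable (cells lν) B ∧ res e B = res e (A (σ j)) ∧ (A (σ j)).1 < B.1}
      = A '' ({k : Fin r | k < σ j} \ (σ '' {j' : Fin r | j' < j})) := by
    ext B
    obtain ⟨x, y⟩ := B
    simp only [Set.mem_setOf_eq, Set.mem_image, Set.mem_diff]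
    constructor
    · rintro ⟨hrem, hres', hrow'⟩
      rw [removable_cells_iff hlν_anti] at hrem
      obtain ⟨hx, hy, hyeq, hlt⟩ := hrem
      have hxP : x ≤ (A i0).1 := by
        by_contra h
        have h0 := hbelow x (by omega)
        have h1 := hlν_le x
        omega
      by_cases hxR : x ∈ Rem
      · exfalso
        obtain ⟨-, -, hlx, hfx⟩ := hRem_P x hxR
        have hy2 : y = l x - 1 := by
          rw [hlν_in x hxR] at hyeq
          omega
        have hlx2 : 2 ≤ l x := by omega
        have ht1 : 1 ≤ t := by omega
        have hres1 : res e (x, y) = ((t - 1 : ℕ) : ZMod e) - 1 :=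
          res_of_ladder (by omega) (by omega) (show y + (x - 1) * (e - 1) = t - 1 by omega)
        rw [hres1, hres (σ j), sub_left_inj] at hres'
        rw [show t = (t - 1) + 1 by omega] at hres'
        exact cast_contra (d := 1) le_rfl (by omega) hres'
      · have hfx := hft (A (σ j)).1 x ha1 (by omega) hxP hla1 hfa
        have hy2 : y = l x := by
          rw [hlν_out x hxR] at hyeq
          omega
        obtain ⟨k, hk⟩ := hsurj' x (by omega) hfx.1 hfx.2
        refine ⟨k, ⟨?_, ?_⟩, ?_⟩
        · exact (hρlt (σ j) k).mp (by omega)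
        · rintro ⟨j', hj', hj'k⟩
          apply hxR
          exact (hRem_iff x).mpr ⟨j', hj', by rw [hj'k, hk]⟩
        · rw [hy2, ← hk, ← hAval k]
    · rintro ⟨k, ⟨hks, hkR⟩, hAk⟩
      obtain ⟨hx1, hy1⟩ : (A k).1 = x ∧ (A k).2 = y := by
        rw [hAk]; exact ⟨rfl, rfl⟩
      subst hx1
      subst hy1
      have hrowgt : (A (σ j)).1 < (A k).1 := (hρlt (σ j) k).mpr hks
      have hxRem : (A k).1 ∉ Rem := by
        intro hmem
        obtain ⟨j', hj', hj'row⟩ := (hRem_iff _).mp hmem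
        exact hkR ⟨j', hj', hrow_inj _ _ hj'row⟩
      refine ⟨?_, ?_, by simpa using hrowgt⟩
      · rw [removable_cells_iff hlν_anti]
        refine ⟨(hAcell k).1, ?_, ?_, ?_⟩
        · rw [hAval k]; exact hl1row k
        · rw [hAval k, hlν_out _ hxRem]
        · rw [hlν_out _ hxRem]
          by_cases hxP' : (A k).1 = (A i0).1
          · have h0 := hbelow ((A k).1 + 1) (by omega)
            have h1 := hlν_le ((A k).1 + 1)
            have h2 := hl1row k
            omega
          · have hxP : (A k).1 ≤ (A i0).1 := hρ0max k
            have hnext := hft (A k).1 ((A k).1 + 1) (by omega) (by omega) (by omega)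
              (hl1row k) (hft_eq k)
            have hst := hstep' (A k).1 (by omega) (hft_eq k) hnext.2
            have h1 := hlν_le ((A k).1 + 1)
            omega
      · show res e (A k) = res e (A (σ j))
        rw [hres k, hres (σ j)]
  -- ======== counting ========
  have h1 : (σ '' {j' : Fin r | j' < j}) ∩ {k : Fin r | k < σ j}
      = σ '' {j' : Fin r | j' < j ∧ σ j' < σ j} := by
    ext k
    simp only [Set.mem_inter_iff, Set.mem_image, Set.mem_setOf_eq]
    constructor
    · rintro ⟨⟨j', hj', rfl⟩, hk⟩
      exact ⟨j', ⟨hj', hk⟩, rfl⟩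
    · rintro ⟨j', ⟨hj', hk⟩, rfl⟩
      exact ⟨⟨j', hj', rfl⟩, hk⟩
  have h2 : ({k : Fin r | k < σ j} \ (σ '' {j' : Fin r | j' < j}))
      = {k : Fin r | k < σ j} \ ((σ '' {j' : Fin r | j' < j}) ∩ {k : Fin r | k < σ j}) := by
    ext k
    simp only [Set.mem_diff, Set.mem_inter_iff, Set.mem_setOf_eq]
    tauto
  have hmstat : mstat σ j = {j' : Fin r | j' < j ∧ σ j' < σ j}.ncard := rfl
  have hmle : mstat σ j ≤ ((σ j : ℕ)) := by
    rw [hmstat]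
    calc {j' : Fin r | j' < j ∧ σ j' < σ j}.ncard
        = (σ '' {j' : Fin r | j' < j ∧ σ j' < σ j}).ncard :=
          (Set.ncard_image_of_injective _ σ.injective).symm
      _ ≤ {k : Fin r | k < σ j}.ncard := by
          apply Set.ncard_le_ncard ?_ (Set.toFinite _)
          rintro k ⟨j', ⟨-, h⟩, rfl⟩
          exact h
      _ = ((σ j : ℕ)) := ncard_Iio_fin (σ j)
  have hA1 : (A '' ((σ '' {j' : Fin r | j' < j}) ∩ {k : Fin r | k < σ j})).ncard = mstat σ j := by
    rw [Set.ncard_image_of_injective _ hAinj, h1,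
      Set.ncard_image_of_injective _ σ.injective, hmstat]
  have hA2 : (A '' ({k : Fin r | k < σ j} \ (σ '' {j' : Fin r | j' < j}))).ncard
      = (σ j : ℕ) - mstat σ j := by
    rw [Set.ncard_image_of_injective _ hAinj, h2,
      Set.ncard_diff Set.inter_subset_right (Set.toFinite _), h1,
      Set.ncard_image_of_injective _ σ.injective, ncard_Iio_fin, hmstat]
  unfold degNode
  rw [← hcellsν, hSetAdd, hSetRem, hA1, hA2]
  omega


/-- summing `q` to the total degree of removing the bottom removable
sequence in all possible orders gives `[r]_q!`. -/
theorem bottom_sequence_degree_sum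
    (e r : ℕ) (he : 2 ≤ e) (l : ℕ → ℕ)
    (hl : IsPartitionFun l) (hrestr : IsRestricted e l)
    (t : ℕ) (ht : (cells l ∩ ladder e t).Nonempty)
    (htmax : ∀ u, (cells l ∩ ladder e u).Nonempty → u ≤ t)
    (A : Fin r → ℕ × ℕ)
    (hAmem : ∀ j, A j ∈ cells l ∩ ladder e t)
    (hAinj : Function.Injective A)
    (hAsurj : ∀ p ∈ cells l ∩ ladder e t, ∃ j, A j = p)
    (hAord : ∀ u v : Fin r, u < v → (A v).1 < (A u).1) :
    ∑ σ : Equiv.Perm (Fin r),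
        LaurentPolynomial.T (∑ j : Fin r,
          degNode e (cells l \ (fun k => A (σ k)) '' {k : Fin r | k < j}) (A (σ j))) =
      qfact r := by
  classical
  rcases Nat.eq_zero_or_pos r with rfl | hr0
  · -- r = 0
    simp only [Finset.univ_eq_empty (α := Fin 0), Finset.sum_empty, LaurentPolynomial.T_zero]
    rw [Finset.sum_const, show qfact 0 = 1 by
      unfold qfact; rw [Finset.Icc_eq_empty (by omega), Finset.prod_empty]]
    simp
  · have hdeg := degNode_eq e r he l hl hrestr t htmax A hAmem hAinj hAsurj hAord hr0
    have hstat : ∀ σ : Equiv.Perm (Fin r),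
        (∑ j : Fin r, degNode e (cells l \ (fun k => A (σ k)) '' {k : Fin r | k < j}) (A (σ j)))
          = Sstat σ := by
      intro σ
      unfold Sstat
      exact Finset.sum_congr rfl fun j _ => hdeg σ j
    calc ∑ σ : Equiv.Perm (Fin r),
        LaurentPolynomial.T (∑ j : Fin r,
          degNode e (cells l \ (fun k => A (σ k)) '' {k : Fin r | k < j}) (A (σ j)))
        = ∑ σ : Equiv.Perm (Fin r), LaurentPolynomial.T (R := ℤ) (Sstat σ) := by
          apply Finset.sum_congr rfl
          intro σ _
          rw [hstat σ]
      _ = qfact r := sum_T_Sstat r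


end KN
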